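/- Let ν : (Fin n → ℝ) → ℝ be a norm (ν(x) = 0 iff x = 0, ν(c • x) = |c|·ν(x), ν(x + y) ≤ ν(x) + ν(y)), and let f : ℝ → ℝ be continuous on [0,∞), strictly increasing on [0,∞), and nonnegative on [0,∞). For positive semidefinite n×n complex matrices ρ, σ define D(ρ, σ) := sup over unitary n×n matrices U of ν( fun i => f(Re((Uᴴ * ρ * U) i i)) − f(Re((Uᴴ * σ * U) i i)) ) (this supremum is attained by compactness of the unitary group). Then D is a metric on the set of positive semidefinite n×n complex matrices: D(ρ,σ) = D(σ,ρ), D(ρ,σ) = 0 if and only if ρ = σ, and D(ρ,τ) ≤ D(ρ,σ) + D(σ,τ). -/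

import Mathlib

open Matrix ComplexOrder

/-- The distance obtained by maximizing, over all unitaries `U`, a norm of the
difference of `f` applied to the diagonals of the conjugated matrices. -/
noncomputable def unitaryDiagDist (n : ℕ) (ν : (Fin n → ℝ) → ℝ) (f : ℝ → ℝ)
    (ρ σ : Matrix (Fin n) (Fin n) ℂ) : ℝ :=
  sSup {r : ℝ | ∃ U : Matrix (Fin n) (Fin n) ℂ, Uᴴ * U = 1 ∧
    r = ν (fun i => f (((Uᴴ * ρ * U) i i).re) - f (((Uᴴ * σ * U) i i).re))}

/-- `unitaryDiagDist` is a metric on positive semidefinite matrices. -/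
theorem unitaryDiagDist_is_metric (n : ℕ) (ν : (Fin n → ℝ) → ℝ) (f : ℝ → ℝ)
    (hν0 : ∀ x : Fin n → ℝ, ν x = 0 ↔ x = 0)
    (hνsmul : ∀ (c : ℝ) (x : Fin n → ℝ), ν (c • x) = |c| * ν x)
    (hνadd : ∀ x y : Fin n → ℝ, ν (x + y) ≤ ν x + ν y)
    (hfc : ContinuousOn f (Set.Ici 0))
    (hfm : StrictMonoOn f (Set.Ici 0))
    (hf0 : ∀ x ∈ Set.Ici (0 : ℝ), 0 ≤ f x) :
    (∀ ρ σ : Matrix (Fin n) (Fin n) ℂ, ρ.PosSemidef → σ.PosSemidef →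
      unitaryDiagDist n ν f ρ σ = unitaryDiagDist n ν f σ ρ) ∧
    (∀ ρ σ : Matrix (Fin n) (Fin n) ℂ, ρ.PosSemidef → σ.PosSemidef →
      (unitaryDiagDist n ν f ρ σ = 0 ↔ ρ = σ)) ∧
    (∀ ρ σ τ : Matrix (Fin n) (Fin n) ℂ, ρ.PosSemidef → σ.PosSemidef → τ.PosSemidef →
      unitaryDiagDist n ν f ρ τ ≤
        unitaryDiagDist n ν f ρ σ + unitaryDiagDist n ν f σ τ) := by
  classical
  set S : Matrix (Fin n) (Fin n) ℂ → Matrix (Fin n) (Fin n) ℂ → Set ℝ :=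
    fun ρ σ => {r : ℝ | ∃ U : Matrix (Fin n) (Fin n) ℂ, Uᴴ * U = 1 ∧
      r = ν (fun i => f (((Uᴴ * ρ * U) i i).re) - f (((Uᴴ * σ * U) i i).re))} with hS
  have hDdef : ∀ ρ σ, unitaryDiagDist n ν f ρ σ = sSup (S ρ σ) := fun _ _ => rfl
  -- basic facts about ν
  have hν0' : ν 0 = 0 := (hν0 0).mpr rfl
  have hνneg : ∀ x, ν (-x) = ν x := by
    intro x
    have := hνsmul (-1) x
    simpa using this
  have hνnonneg : ∀ x, 0 ≤ ν x := by
    intro x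
    have h := hνadd x (-x)
    rw [add_neg_cancel, hν0', hνneg] at h
    linarith
  have hνsum : ∀ (s : Finset (Fin n)) (g : Fin n → (Fin n → ℝ)),
      ν (∑ i ∈ s, g i) ≤ ∑ i ∈ s, ν (g i) := by
    intro s g
    induction s using Finset.induction with
    | empty => simp [hν0']
    | insert a s hx ih =>
      rw [Finset.sum_insert hx, Finset.sum_insert hx]
      exact le_trans (hνadd _ _) (by linarith)
  have hνle : ∀ x : Fin n → ℝ, ν x ≤ ∑ i, |x i| * ν (Pi.single i 1) := by
    intro x
    have hx : x = ∑ i, (x i) • (Pi.single i 1 : Fin n → ℝ) := by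
      funext j
      simp [Pi.single_apply]
    have h1 : ν x ≤ ∑ i, ν ((x i) • (Pi.single i 1 : Fin n → ℝ)) := by
      conv_lhs => rw [hx]
      exact hνsum _ _
    exact h1.trans_eq (Finset.sum_congr rfl fun i _ => hνsmul _ _)
  -- diagonal entries of psd matrices
  have hdiag : ∀ (A : Matrix (Fin n) (Fin n) ℂ), A.PosSemidef → ∀ i, 0 ≤ (A i i).re := by
    intro A hA i
    have := hA.re_dotProduct_nonneg (Pi.single i 1)
    simpa [dotProduct, Pi.single_apply, apply_ite] using this
  have htr : ∀ (A : Matrix (Fin n) (Fin n) ℂ), A.PosSemidef → ∀ i, (A i i).re ≤ A.trace.re := by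
    intro A hA i
    have h1 : A.trace.re = ∑ j, (A j j).re := by
      simp [Matrix.trace, Matrix.diag, Complex.re_sum]
    rw [h1]
    exact Finset.single_le_sum (fun j _ => hdiag A hA j) (Finset.mem_univ i)
  -- entrywise bound
  have key : ∀ ρ σ : Matrix (Fin n) (Fin n) ℂ, ρ.PosSemidef → σ.PosSemidef →
      ∀ U : Matrix (Fin n) (Fin n) ℂ, Uᴴ * U = 1 → ∀ i,
      |f (((Uᴴ * ρ * U) i i).re) - f (((Uᴴ * σ * U) i i).re)|
        ≤ f (ρ.trace.re) + f (σ.trace.re) := by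
    intro ρ σ hρ hσ U hU i
    have hUU : U * Uᴴ = 1 := mul_eq_one_comm.mp hU
    have hρ' : (Uᴴ * ρ * U).PosSemidef := hρ.conjTranspose_mul_mul_same U
    have hσ' : (Uᴴ * σ * U).PosSemidef := hσ.conjTranspose_mul_mul_same U
    have htρ : (Uᴴ * ρ * U).trace = ρ.trace := by
      rw [Matrix.trace_mul_cycle, hUU, one_mul]
    have htσ : (Uᴴ * σ * U).trace = σ.trace := by
      rw [Matrix.trace_mul_cycle, hUU, one_mul]
    have hp0 : (0 : ℝ) ≤ ((Uᴴ * ρ * U) i i).re := hdiag _ hρ' i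
    have hs0 : (0 : ℝ) ≤ ((Uᴴ * σ * U) i i).re := hdiag _ hσ' i
    have hp1 : ((Uᴴ * ρ * U) i i).re ≤ ρ.trace.re := htρ ▸ htr _ hρ' i
    have hs1 : ((Uᴴ * σ * U) i i).re ≤ σ.trace.re := htσ ▸ htr _ hσ' i
    have hfp0 : 0 ≤ f (((Uᴴ * ρ * U) i i).re) := hf0 _ hp0
    have hfs0 : 0 ≤ f (((Uᴴ * σ * U) i i).re) := hf0 _ hs0
    have hfp1 : f (((Uᴴ * ρ * U) i i).re) ≤ f (ρ.trace.re) :=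
      hfm.monotoneOn hp0 (le_trans hp0 hp1) hp1
    have hfs1 : f (((Uᴴ * σ * U) i i).re) ≤ f (σ.trace.re) :=
      hfm.monotoneOn hs0 (le_trans hs0 hs1) hs1
    exact abs_le.mpr ⟨by linarith, by linarith⟩
  -- boundedness and nonemptiness
  have hbdd : ∀ ρ σ : Matrix (Fin n) (Fin n) ℂ, ρ.PosSemidef → σ.PosSemidef →
      BddAbove (S ρ σ) := by
    intro ρ σ hρ hσ
    refine ⟨(f (ρ.trace.re) + f (σ.trace.re)) * ∑ i, ν (Pi.single i 1), ?_⟩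
    rintro r ⟨U, hU, rfl⟩
    calc ν _ ≤ ∑ i, |f (((Uᴴ * ρ * U) i i).re) - f (((Uᴴ * σ * U) i i).re)|
          * ν (Pi.single i 1) := hνle _
      _ ≤ ∑ i, (f (ρ.trace.re) + f (σ.trace.re)) * ν (Pi.single i 1) :=
          Finset.sum_le_sum fun i _ =>
            mul_le_mul_of_nonneg_right (key ρ σ hρ hσ U hU i) (hνnonneg _)
      _ = (f (ρ.trace.re) + f (σ.trace.re)) * ∑ i, ν (Pi.single i 1) := by
          rw [Finset.mul_sum]
  have hne : ∀ ρ σ : Matrix (Fin n) (Fin n) ℂ, (S ρ σ).Nonempty := by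
    intro ρ σ
    exact ⟨_, 1, by simp, rfl⟩
  -- symmetry
  have hsymm : ∀ ρ σ : Matrix (Fin n) (Fin n) ℂ,
      unitaryDiagDist n ν f ρ σ = unitaryDiagDist n ν f σ ρ := by
    intro ρ σ
    rw [hDdef, hDdef]
    congr 1
    have : ∀ (a b : Matrix (Fin n) (Fin n) ℂ) (U : Matrix (Fin n) (Fin n) ℂ),
        ν (fun i => f (((Uᴴ * a * U) i i).re) - f (((Uᴴ * b * U) i i).re))
        = ν (fun i => f (((Uᴴ * b * U) i i).re) - f (((Uᴴ * a * U) i i).re)) := by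
      intro a b U
      rw [← hνneg]
      congr 1
      funext i
      simp
    ext r
    constructor <;> rintro ⟨U, hU, rfl⟩
    · exact ⟨U, hU, this ρ σ U⟩
    · exact ⟨U, hU, this σ ρ U⟩
  refine ⟨fun ρ σ _ _ => hsymm ρ σ, ?_, ?_⟩
  · -- definiteness
    intro ρ σ hρ hσ
    constructor
    · intro h
      set A : Matrix (Fin n) (Fin n) ℂ := ρ - σ with hAdef
      have hA : A.IsHermitian := hρ.1.sub hσ.1
      set U : Matrix (Fin n) (Fin n) ℂ := (hA.eigenvectorUnitary : Matrix (Fin n) (Fin n) ℂ)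
        with hUdef
      have hU : Uᴴ * U = 1 := by
        rw [← Matrix.star_eq_conjTranspose]
        exact (Unitary.mem_iff.mp hA.eigenvectorUnitary.2).1
      have hmem : ν (fun i => f (((Uᴴ * ρ * U) i i).re) - f (((Uᴴ * σ * U) i i).re))
          ∈ S ρ σ := ⟨U, hU, rfl⟩
      have hle : ν (fun i => f (((Uᴴ * ρ * U) i i).re) - f (((Uᴴ * σ * U) i i).re)) ≤ 0 := by
        rw [hDdef] at h
        rw [← h]
        exact le_csSup (hbdd ρ σ hρ hσ) hmem
      have hz : (fun i => f (((Uᴴ * ρ * U) i i).re) - f (((Uᴴ * σ * U) i i).re)) = 0 :=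
        (hν0 _).mp (le_antisymm hle (hνnonneg _))
      have hdiageq : ∀ i, ((Uᴴ * ρ * U) i i).re = ((Uᴴ * σ * U) i i).re := by
        intro i
        have h1 : f (((Uᴴ * ρ * U) i i).re) = f (((Uᴴ * σ * U) i i).re) :=
          sub_eq_zero.mp (congrFun hz i)
        exact hfm.injOn (hdiag _ (hρ.conjTranspose_mul_mul_same U) i)
          (hdiag _ (hσ.conjTranspose_mul_mul_same U) i) h1
      have heig : ∀ i, hA.eigenvalues i = 0 := by
        intro i
        have hd : Uᴴ * A * U = Matrix.diagonal (RCLike.ofReal ∘ hA.eigenvalues) := by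
          rw [← hA.conjStarAlgAut_star_eigenvectorUnitary, Unitary.conjStarAlgAut_star_apply,
            Matrix.star_eq_conjTranspose]
        have h2 : (Uᴴ * A * U) i i = ((RCLike.ofReal ∘ hA.eigenvalues) i : ℂ) := by
          rw [hd, Matrix.diagonal_apply_eq]
        have h3 : Uᴴ * A * U = Uᴴ * ρ * U - Uᴴ * σ * U := by
          rw [hAdef, Matrix.mul_sub, Matrix.sub_mul]
        have h4 : ((Uᴴ * A * U) i i).re = 0 := by
          rw [h3]
          simp [Matrix.sub_apply, hdiageq i]
        rw [h2] at h4
        simpa using h4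
      have hA0 : A = 0 := by
        have := hA.spectral_theorem
        have hdz : Matrix.diagonal (RCLike.ofReal ∘ hA.eigenvalues)
            = (0 : Matrix (Fin n) (Fin n) ℂ) := by
          ext i j
          by_cases hij : i = j <;> simp [Matrix.diagonal_apply, hij, heig]
        rw [hdz] at this
        simpa using this
      exact sub_eq_zero.mp hA0
    · rintro rfl
      rw [hDdef]
      apply le_antisymm
      · apply csSup_le (hne ρ ρ)
        rintro r ⟨U, hU, rfl⟩
        exact le_of_eq ((hν0 _).mpr (funext fun i => sub_self _))
      · apply le_csSup (hbdd ρ ρ hρ hρ)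
        exact ⟨1, by simp, ((hν0 _).mpr (funext fun i => sub_self _)).symm⟩
  · -- triangle inequality
    intro ρ σ τ hρ hσ hτ
    rw [hDdef, hDdef, hDdef]
    apply csSup_le (hne ρ τ)
    rintro r ⟨U, hU, rfl⟩
    have hsplit : (fun i => f (((Uᴴ * ρ * U) i i).re) - f (((Uᴴ * τ * U) i i).re))
        = (fun i => f (((Uᴴ * ρ * U) i i).re) - f (((Uᴴ * σ * U) i i).re))
        + (fun i => f (((Uᴴ * σ * U) i i).re) - f (((Uᴴ * τ * U) i i).re)) := by
      funext i
      simp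
    calc ν _ ≤ ν (fun i => f (((Uᴴ * ρ * U) i i).re) - f (((Uᴴ * σ * U) i i).re))
          + ν (fun i => f (((Uᴴ * σ * U) i i).re) - f (((Uᴴ * τ * U) i i).re)) := by
          rw [hsplit]; exact hνadd _ _
      _ ≤ sSup (S ρ σ) + sSup (S σ τ) :=
          add_le_add (le_csSup (hbdd ρ σ hρ hσ) ⟨U, hU, rfl⟩)
            (le_csSup (hbdd σ τ hσ hτ) ⟨U, hU, rfl⟩)
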